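/- For all constants c₁, c₂ ∈ (0, 1/2] there exist a constant C > 0 and an integer n₀ ≥ 2, depending only on c₁ and c₂, such that the following holds: for every instance of the dyadic fixed-effects setup with n ≥ n₀, and all α₀, α̂ ∈ D such that Σ_{j≠i} p_{ij}(α̂) = d_i for every i = 1, …, n, one has ‖α̂ − α₀‖_∞ ≤ (C/n)·max_{1≤i≤n} |d_i − Σ_{j≠i} p_{ij}(α₀)|. (Deterministic sup-norm error bound for any root of the degree moment equations; core of Lemma A.5.) -/

import Mathlib

set_option maxHeartbeats 1000000


open Finset

/-- Mean value theorem in parametric form. -/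
private lemma mvt_param (F f : ℝ → ℝ) (hF : ∀ t : ℝ, HasDerivAt F (f t) t) (a b : ℝ) :
    ∃ θ : ℝ, 0 ≤ θ ∧ θ ≤ 1 ∧ F b - F a = f (a + θ * (b - a)) * (b - a) := by
  rcases lt_trichotomy a b with h | h | h
  · obtain ⟨c, hc, hfc⟩ := exists_hasDerivAt_eq_slope F f h
      (fun t _ => (hF t).continuousAt.continuousWithinAt) (fun t _ => hF t)
    obtain ⟨hc1, hc2⟩ := hc
    have hba : (0:ℝ) < b - a := by linarith
    have hne : b - a ≠ 0 := ne_of_gt hba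
    refine ⟨(c - a) / (b - a), div_nonneg (by linarith) hba.le, ?_, ?_⟩
    · rw [div_le_one hba]; linarith
    · have harg : a + (c - a) / (b - a) * (b - a) = c := by field_simp; ring
      rw [harg, hfc]; field_simp
  · exact ⟨0, le_refl _, by norm_num, by rw [h]; ring⟩
  · obtain ⟨c, hc, hfc⟩ := exists_hasDerivAt_eq_slope F f h
      (fun t _ => (hF t).continuousAt.continuousWithinAt) (fun t _ => hF t)
    obtain ⟨hc1, hc2⟩ := hc
    have hba : b - a < 0 := by linarith
    have hne : b - a ≠ 0 := ne_of_lt hba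
    refine ⟨(c - a) / (b - a), div_nonneg_of_nonpos (by linarith) hba.le, ?_, ?_⟩
    · rw [div_le_iff_of_neg hba]; linarith
    · have harg : a + (c - a) / (b - a) * (b - a) = c := by field_simp; ring
      rw [harg, hfc]
      have hne2 : a - b ≠ 0 := by intro h'; apply hne; linarith
      field_simp
      ring

/-- Core combinatorial lemma, asymmetric version (assuming the negative set is the
smaller one). -/
private lemma key_aux {n : ℕ} (hn : 4 ≤ n) (δ : ℝ) (hδ : 0 < δ) (hδ1 : δ ≤ 1)
    (t : Fin n → Fin n → ℝ) (ht : ∀ i j : Fin n, i ≠ j → δ ≤ t i j ∧ t i j ≤ 1)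
    (u E : Fin n → ℝ)
    (hE : ∀ i, E i = ∑ j ∈ univ.erase i, (t i j * u i + t j i * u j))
    (B : ℝ) (hB : ∀ i, |E i| ≤ B)
    (hcard : (univ.filter fun i => ¬ (0:ℝ) ≤ u i).card ≤
      (univ.filter fun i => (0:ℝ) ≤ u i).card) :
    ∀ i, |u i| ≤ 14 / δ ^ 3 / (n : ℝ) * B := by
  classical
  have hν : (4:ℝ) ≤ (n:ℝ) := by exact_mod_cast hn
  have hn1 : 1 ≤ n := by omega
  have hB0 : 0 ≤ B := le_trans (abs_nonneg _) (hB ⟨0, by omega⟩)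
  have hcast : ((n - 1 : ℕ) : ℝ) = (n:ℝ) - 1 := by
    rw [Nat.cast_sub hn1, Nat.cast_one]
  -- positive and negative index sets
  have hpq : (univ.filter fun i => (0:ℝ) ≤ u i).card
      + (univ.filter fun i => ¬ (0:ℝ) ≤ u i).card = n := by
    rw [Finset.card_filter_add_card_filter_not]
    simp
  have hTp0 : 0 ≤ ∑ j ∈ univ.filter (fun i => (0:ℝ) ≤ u i), u j :=
    Finset.sum_nonneg fun j hj => (mem_filter.mp hj).2
  have hSm0 : ∑ j ∈ univ.filter (fun i => ¬ (0:ℝ) ≤ u i), u j ≤ 0 :=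
    Finset.sum_nonpos fun j hj => le_of_not_ge (mem_filter.mp hj).2
  -- sums of min/max
  have hminsum : ∑ j ∈ univ, min (u j) 0
      = ∑ j ∈ univ.filter (fun i => ¬ (0:ℝ) ≤ u i), u j := by
    rw [← Finset.sum_filter_add_sum_filter_not univ (fun i => (0:ℝ) ≤ u i)
      (fun j => min (u j) 0)]
    have h1 : ∑ j ∈ univ.filter (fun i => (0:ℝ) ≤ u i), min (u j) 0 = 0 :=
      Finset.sum_eq_zero fun j hj => min_eq_right (mem_filter.mp hj).2
    have h2 : ∑ j ∈ univ.filter (fun i => ¬ (0:ℝ) ≤ u i), min (u j) 0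
        = ∑ j ∈ univ.filter (fun i => ¬ (0:ℝ) ≤ u i), u j :=
      Finset.sum_congr rfl fun j hj =>
        min_eq_left (le_of_lt (lt_of_not_ge (mem_filter.mp hj).2))
    rw [h1, h2, zero_add]
  have hmaxsum : ∑ j ∈ univ, max (u j) 0
      = ∑ j ∈ univ.filter (fun i => (0:ℝ) ≤ u i), u j := by
    rw [← Finset.sum_filter_add_sum_filter_not univ (fun i => (0:ℝ) ≤ u i)
      (fun j => max (u j) 0)]
    have h1 : ∑ j ∈ univ.filter (fun i => (0:ℝ) ≤ u i), max (u j) 0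
        = ∑ j ∈ univ.filter (fun i => (0:ℝ) ≤ u i), u j :=
      Finset.sum_congr rfl fun j hj => max_eq_left (mem_filter.mp hj).2
    have h2 : ∑ j ∈ univ.filter (fun i => ¬ (0:ℝ) ≤ u i), max (u j) 0 = 0 :=
      Finset.sum_eq_zero fun j hj =>
        max_eq_right (le_of_lt (lt_of_not_ge (mem_filter.mp hj).2))
    rw [h1, h2, add_zero]
  -- row lower bound for nonnegative coordinates
  have hrow_pos : ∀ i, 0 ≤ u i → ((n:ℝ) - 1) * (δ * u i)
      ≤ B - ∑ j ∈ univ.filter (fun i => ¬ (0:ℝ) ≤ u i), u j := by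
    intro i hi
    have hterm : ∀ j ∈ univ.erase i,
        δ * u i + min (u j) 0 ≤ t i j * u i + t j i * u j := by
      intro j hj
      have hji : j ≠ i := (mem_erase.mp hj).1
      obtain ⟨ha1, ha2⟩ := ht i j (Ne.symm hji)
      obtain ⟨hb1, hb2⟩ := ht j i hji
      have e1 : δ * u i ≤ t i j * u i := mul_le_mul_of_nonneg_right ha1 hi
      have e2 : min (u j) 0 ≤ t j i * u j := by
        rcases le_or_gt 0 (u j) with hj' | hj'
        · exact le_trans (min_le_right _ _) (mul_nonneg (le_trans hδ.le hb1) hj')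
        · refine le_trans (min_le_left _ _) ?_
          nlinarith
      linarith
    have hsum := Finset.sum_le_sum hterm
    rw [← hE i, Finset.sum_add_distrib, Finset.sum_const, Finset.card_erase_of_mem (mem_univ i),
      Finset.card_univ, Fintype.card_fin, nsmul_eq_mul, hcast] at hsum
    have hmin1 : ∑ j ∈ univ, min (u j) 0 ≤ ∑ j ∈ univ.erase i, min (u j) 0 := by
      have h := Finset.sum_erase_add univ (fun j => min (u j) 0) (mem_univ i)
      have h2 : min (u i) 0 ≤ 0 := min_le_right _ _
      linarith
    have hEB : E i ≤ B := le_trans (le_abs_self _) (hB i)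
    rw [hminsum] at hmin1
    linarith
  -- row upper bound for negative coordinates
  have hrow_neg : ∀ i, ¬ (0:ℝ) ≤ u i →
      -(B + ∑ j ∈ univ.filter (fun i => (0:ℝ) ≤ u i), u j)
        ≤ ((n:ℝ) - 1) * (δ * u i) := by
    intro i hi
    have hi' : u i < 0 := lt_of_not_ge hi
    have hterm : ∀ j ∈ univ.erase i,
        t i j * u i + t j i * u j ≤ δ * u i + max (u j) 0 := by
      intro j hj
      have hji : j ≠ i := (mem_erase.mp hj).1
      obtain ⟨ha1, ha2⟩ := ht i j (Ne.symm hji)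
      obtain ⟨hb1, hb2⟩ := ht j i hji
      have e1 : t i j * u i ≤ δ * u i := by nlinarith
      have e2 : t j i * u j ≤ max (u j) 0 := by
        rcases le_or_gt 0 (u j) with hj' | hj'
        · refine le_trans ?_ (le_max_left _ _)
          nlinarith
        · refine le_trans ?_ (le_max_right _ _)
          nlinarith
      linarith
    have hsum := Finset.sum_le_sum hterm
    rw [← hE i, Finset.sum_add_distrib, Finset.sum_const, Finset.card_erase_of_mem (mem_univ i),
      Finset.card_univ, Fintype.card_fin, nsmul_eq_mul, hcast] at hsum
    have hmax1 : ∑ j ∈ univ.erase i, max (u j) 0 ≤ ∑ j ∈ univ, max (u j) 0 := by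
      have h := Finset.sum_erase_add univ (fun j => max (u j) 0) (mem_univ i)
      have h2 : (0:ℝ) ≤ max (u i) 0 := le_max_right _ _
      linarith
    have hEB : -B ≤ E i := (abs_le.mp (hB i)).1
    rw [hmaxsum] at hmax1
    linarith
  -- the key double-sum inequality
  have hsplitP : ∀ i ∈ univ.filter (fun i => (0:ℝ) ≤ u i),
      E i = (∑ j ∈ (univ.filter fun i => (0:ℝ) ≤ u i).erase i,
        (t i j * u i + t j i * u j))
        + ∑ j ∈ univ.filter (fun i => ¬ (0:ℝ) ≤ u i), (t i j * u i + t j i * u j) := by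
    intro i hi
    have e1 : (univ.erase i).filter (fun j => (0:ℝ) ≤ u j)
        = (univ.filter fun i => (0:ℝ) ≤ u i).erase i := by rw [Finset.filter_erase]
    have e2 : (univ.erase i).filter (fun j => ¬ (0:ℝ) ≤ u j)
        = univ.filter fun i => ¬ (0:ℝ) ≤ u i := by
      rw [Finset.filter_erase]
      apply Finset.erase_eq_of_notMem
      simp only [Finset.mem_filter, Finset.mem_univ, true_and, not_not]
      exact (mem_filter.mp hi).2
    rw [hE i, ← Finset.sum_filter_add_sum_filter_not (univ.erase i)
      (fun j => (0:ℝ) ≤ u j), e1, e2]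
  have hsplitN : ∀ i ∈ univ.filter (fun i => ¬ (0:ℝ) ≤ u i),
      E i = (∑ j ∈ (univ.filter fun i => ¬ (0:ℝ) ≤ u i).erase i,
        (t i j * u i + t j i * u j))
        + ∑ j ∈ univ.filter (fun i => (0:ℝ) ≤ u i), (t i j * u i + t j i * u j) := by
    intro i hi
    have e1 : (univ.erase i).filter (fun j => (0:ℝ) ≤ u j)
        = univ.filter fun i => (0:ℝ) ≤ u i := by
      rw [Finset.filter_erase]
      apply Finset.erase_eq_of_notMem
      simp only [Finset.mem_filter, Finset.mem_univ, true_and]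
      exact fun h => (mem_filter.mp hi).2 h
    have e2 : (univ.erase i).filter (fun j => ¬ (0:ℝ) ≤ u j)
        = (univ.filter fun i => ¬ (0:ℝ) ≤ u i).erase i := by rw [Finset.filter_erase]
    rw [hE i, ← Finset.sum_filter_add_sum_filter_not (univ.erase i)
      (fun j => (0:ℝ) ≤ u j), e1, e2, add_comm]
  -- cross sum symmetry
  have hXX : ∑ i ∈ univ.filter (fun i => ¬ (0:ℝ) ≤ u i),
      ∑ j ∈ univ.filter (fun i => (0:ℝ) ≤ u i), (t i j * u i + t j i * u j)
      = ∑ i ∈ univ.filter (fun i => (0:ℝ) ≤ u i),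
        ∑ j ∈ univ.filter (fun i => ¬ (0:ℝ) ≤ u i), (t i j * u i + t j i * u j) := by
    rw [Finset.sum_comm]
    exact Finset.sum_congr rfl fun i _ => Finset.sum_congr rfl fun j _ => by ring
  -- within-P double sum lower bound
  have hPP : 2 * δ * (((univ.filter fun i => (0:ℝ) ≤ u i).card : ℝ) - 1)
        * (∑ j ∈ univ.filter (fun i => (0:ℝ) ≤ u i), u j)
      ≤ ∑ i ∈ univ.filter (fun i => (0:ℝ) ≤ u i),
        ∑ j ∈ (univ.filter fun i => (0:ℝ) ≤ u i).erase i,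
          (t i j * u i + t j i * u j) := by
    have hterm : ∀ i ∈ univ.filter (fun i => (0:ℝ) ≤ u i),
        δ * ((((univ.filter fun i => (0:ℝ) ≤ u i).card : ℝ) - 1) * u i
          + ((∑ j ∈ univ.filter (fun i => (0:ℝ) ≤ u i), u j) - u i))
        ≤ ∑ j ∈ (univ.filter fun i => (0:ℝ) ≤ u i).erase i,
          (t i j * u i + t j i * u j) := by
      intro i hi
      have hinner : ∑ j ∈ (univ.filter fun i => (0:ℝ) ≤ u i).erase i,
          (δ * (u i + u j))
          = δ * ((((univ.filter fun i => (0:ℝ) ≤ u i).card : ℝ) - 1) * u i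
            + ((∑ j ∈ univ.filter (fun i => (0:ℝ) ≤ u i), u j) - u i)) := by
        rw [← Finset.mul_sum, Finset.sum_add_distrib, Finset.sum_const,
          Finset.sum_erase_eq_sub hi, Finset.card_erase_of_mem hi, nsmul_eq_mul,
          Nat.cast_sub (Finset.one_le_card.mpr ⟨i, hi⟩), Nat.cast_one]
      rw [← hinner]
      refine Finset.sum_le_sum fun j hj => ?_
      have hji : j ≠ i := (mem_erase.mp hj).1
      have hui : 0 ≤ u i := (mem_filter.mp hi).2
      have huj : 0 ≤ u j := (mem_filter.mp (Finset.mem_of_mem_erase hj)).2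
      obtain ⟨ha1, _⟩ := ht i j (Ne.symm hji)
      obtain ⟨hb1, _⟩ := ht j i hji
      nlinarith [mul_le_mul_of_nonneg_right ha1 hui, mul_le_mul_of_nonneg_right hb1 huj]
    have h := Finset.sum_le_sum hterm
    have heq : ∑ i ∈ univ.filter (fun i => (0:ℝ) ≤ u i),
        δ * ((((univ.filter fun i => (0:ℝ) ≤ u i).card : ℝ) - 1) * u i
          + ((∑ j ∈ univ.filter (fun i => (0:ℝ) ≤ u i), u j) - u i))
        = 2 * δ * (((univ.filter fun i => (0:ℝ) ≤ u i).card : ℝ) - 1)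
          * (∑ j ∈ univ.filter (fun i => (0:ℝ) ≤ u i), u j) := by
      rw [← Finset.mul_sum, Finset.sum_add_distrib, ← Finset.mul_sum,
        Finset.sum_sub_distrib, Finset.sum_const, nsmul_eq_mul]
      ring
    linarith
  -- within-N double sum upper bound
  have hNN : ∑ i ∈ univ.filter (fun i => ¬ (0:ℝ) ≤ u i),
        ∑ j ∈ (univ.filter fun i => ¬ (0:ℝ) ≤ u i).erase i,
          (t i j * u i + t j i * u j)
      ≤ 2 * δ * (((univ.filter fun i => ¬ (0:ℝ) ≤ u i).card : ℝ) - 1)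
        * (∑ j ∈ univ.filter (fun i => ¬ (0:ℝ) ≤ u i), u j) := by
    have hterm : ∀ i ∈ univ.filter (fun i => ¬ (0:ℝ) ≤ u i),
        ∑ j ∈ (univ.filter fun i => ¬ (0:ℝ) ≤ u i).erase i,
          (t i j * u i + t j i * u j)
        ≤ δ * ((((univ.filter fun i => ¬ (0:ℝ) ≤ u i).card : ℝ) - 1) * u i
          + ((∑ j ∈ univ.filter (fun i => ¬ (0:ℝ) ≤ u i), u j) - u i)) := by
      intro i hi
      have hinner : ∑ j ∈ (univ.filter fun i => ¬ (0:ℝ) ≤ u i).erase i,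
          (δ * (u i + u j))
          = δ * ((((univ.filter fun i => ¬ (0:ℝ) ≤ u i).card : ℝ) - 1) * u i
            + ((∑ j ∈ univ.filter (fun i => ¬ (0:ℝ) ≤ u i), u j) - u i)) := by
        rw [← Finset.mul_sum, Finset.sum_add_distrib, Finset.sum_const,
          Finset.sum_erase_eq_sub hi, Finset.card_erase_of_mem hi, nsmul_eq_mul,
          Nat.cast_sub (Finset.one_le_card.mpr ⟨i, hi⟩), Nat.cast_one]
      rw [← hinner]
      refine Finset.sum_le_sum fun j hj => ?_
      have hji : j ≠ i := (mem_erase.mp hj).1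
      have hui : u i ≤ 0 := le_of_not_ge (mem_filter.mp hi).2
      have huj : u j ≤ 0 :=
        le_of_not_ge (mem_filter.mp (Finset.mem_of_mem_erase hj)).2
      obtain ⟨ha1, _⟩ := ht i j (Ne.symm hji)
      obtain ⟨hb1, _⟩ := ht j i hji
      nlinarith [mul_le_mul_of_nonpos_right ha1 hui, mul_le_mul_of_nonpos_right hb1 huj]
    have h := Finset.sum_le_sum hterm
    have heq : ∑ i ∈ univ.filter (fun i => ¬ (0:ℝ) ≤ u i),
        δ * ((((univ.filter fun i => ¬ (0:ℝ) ≤ u i).card : ℝ) - 1) * u i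
          + ((∑ j ∈ univ.filter (fun i => ¬ (0:ℝ) ≤ u i), u j) - u i))
        = 2 * δ * (((univ.filter fun i => ¬ (0:ℝ) ≤ u i).card : ℝ) - 1)
          * (∑ j ∈ univ.filter (fun i => ¬ (0:ℝ) ≤ u i), u j) := by
      rw [← Finset.mul_sum, Finset.sum_add_distrib, ← Finset.mul_sum,
        Finset.sum_sub_distrib, Finset.sum_const, nsmul_eq_mul]
      ring
    linarith
  -- sums of E over P and N
  have hSPle : ∑ i ∈ univ.filter (fun i => (0:ℝ) ≤ u i), E i
      ≤ ((univ.filter fun i => (0:ℝ) ≤ u i).card : ℝ) * B := by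
    calc ∑ i ∈ univ.filter (fun i => (0:ℝ) ≤ u i), E i
        ≤ ∑ _i ∈ univ.filter (fun i => (0:ℝ) ≤ u i), B :=
          Finset.sum_le_sum fun i _ => le_trans (le_abs_self _) (hB i)
      _ = _ := by rw [Finset.sum_const, nsmul_eq_mul]
  have hSNge : -(((univ.filter fun i => ¬ (0:ℝ) ≤ u i).card : ℝ) * B)
      ≤ ∑ i ∈ univ.filter (fun i => ¬ (0:ℝ) ≤ u i), E i := by
    calc -(((univ.filter fun i => ¬ (0:ℝ) ≤ u i).card : ℝ) * B)
        = ∑ _i ∈ univ.filter (fun i => ¬ (0:ℝ) ≤ u i), (-B) := by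
          rw [Finset.sum_const, nsmul_eq_mul]; ring
      _ ≤ _ := Finset.sum_le_sum fun i _ => (abs_le.mp (hB i)).1
  have hSPeq : ∑ i ∈ univ.filter (fun i => (0:ℝ) ≤ u i), E i
      = (∑ i ∈ univ.filter (fun i => (0:ℝ) ≤ u i),
          ∑ j ∈ (univ.filter fun i => (0:ℝ) ≤ u i).erase i,
            (t i j * u i + t j i * u j))
        + ∑ i ∈ univ.filter (fun i => (0:ℝ) ≤ u i),
          ∑ j ∈ univ.filter (fun i => ¬ (0:ℝ) ≤ u i), (t i j * u i + t j i * u j) := by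
    rw [← Finset.sum_add_distrib]
    exact Finset.sum_congr rfl hsplitP
  have hSNeq : ∑ i ∈ univ.filter (fun i => ¬ (0:ℝ) ≤ u i), E i
      = (∑ i ∈ univ.filter (fun i => ¬ (0:ℝ) ≤ u i),
          ∑ j ∈ (univ.filter fun i => ¬ (0:ℝ) ≤ u i).erase i,
            (t i j * u i + t j i * u j))
        + ∑ i ∈ univ.filter (fun i => (0:ℝ) ≤ u i),
          ∑ j ∈ univ.filter (fun i => ¬ (0:ℝ) ≤ u i), (t i j * u i + t j i * u j) := by
    rw [← hXX, ← Finset.sum_add_distrib]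
    exact Finset.sum_congr rfl hsplitN
  -- KEY inequality
  have hKEY : 2 * δ * (((univ.filter fun i => (0:ℝ) ≤ u i).card : ℝ) - 1)
        * (∑ j ∈ univ.filter (fun i => (0:ℝ) ≤ u i), u j)
      + 2 * δ * (((univ.filter fun i => ¬ (0:ℝ) ≤ u i).card : ℝ) - 1)
        * (-(∑ j ∈ univ.filter (fun i => ¬ (0:ℝ) ≤ u i), u j))
      ≤ (((univ.filter fun i => (0:ℝ) ≤ u i).card : ℝ)
        + ((univ.filter fun i => ¬ (0:ℝ) ≤ u i).card : ℝ)) * B := by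
    linarith [hPP, hNN, hSPle, hSNge, hSPeq, hSNeq]
  -- consequences
  have hqterm : 0 ≤ 2 * δ * (((univ.filter fun i => ¬ (0:ℝ) ≤ u i).card : ℝ) - 1)
      * (-(∑ j ∈ univ.filter (fun i => ¬ (0:ℝ) ≤ u i), u j)) := by
    rcases Finset.eq_empty_or_nonempty (univ.filter fun i => ¬ (0:ℝ) ≤ u i) with h | h
    · rw [h]; simp
    · have h1 : (1:ℝ) ≤ ((univ.filter fun i => ¬ (0:ℝ) ≤ u i).card : ℝ) := by
        exact_mod_cast Finset.one_le_card.mpr h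
      have h2 : 0 ≤ -(∑ j ∈ univ.filter (fun i => ¬ (0:ℝ) ≤ u i), u j) := by linarith
      exact mul_nonneg (mul_nonneg (by positivity) (by linarith)) h2
  have hcards : (((univ.filter fun i => (0:ℝ) ≤ u i).card : ℝ)
      + ((univ.filter fun i => ¬ (0:ℝ) ≤ u i).card : ℝ)) = (n : ℝ) := by
    exact_mod_cast congrArg (fun m : ℕ => (m : ℝ)) hpq
  have hp2 : (n : ℝ) ≤ 2 * ((univ.filter fun i => (0:ℝ) ≤ u i).card : ℝ) := by
    have : n ≤ 2 * (univ.filter fun i => (0:ℝ) ≤ u i).card := by omega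
    exact_mod_cast this
  -- δ * T⁺ ≤ 2 B
  have hTpB : δ * (∑ j ∈ univ.filter (fun i => (0:ℝ) ≤ u i), u j) ≤ 2 * B := by
    have h1 : 2 * δ * (((univ.filter fun i => (0:ℝ) ≤ u i).card : ℝ) - 1)
        * (∑ j ∈ univ.filter (fun i => (0:ℝ) ≤ u i), u j) ≤ (n : ℝ) * B := by
      rw [← hcards]; linarith
    have h2 : 0 ≤ 2 * ((univ.filter fun i => (0:ℝ) ≤ u i).card : ℝ) - 2 - (n:ℝ) / 2 := by
      linarith
    have h4 : 0 ≤ δ * (∑ j ∈ univ.filter (fun i => (0:ℝ) ≤ u i), u j)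
        * (2 * ((univ.filter fun i => (0:ℝ) ≤ u i).card : ℝ) - 2 - (n:ℝ) / 2) :=
      mul_nonneg (mul_nonneg hδ.le hTp0) h2
    by_contra hcon
    push_neg at hcon
    have hx := mul_lt_mul_of_pos_left hcon (by linarith : (0:ℝ) < (n:ℝ) / 2)
    linarith [h1, h4, hx]
  -- δ² * T⁻ ≤ 6 B
  have hTmB : δ ^ 2 * (-(∑ j ∈ univ.filter (fun i => ¬ (0:ℝ) ≤ u i), u j)) ≤ 6 * B := by
    have hq_le : ((univ.filter fun i => ¬ (0:ℝ) ≤ u i).card : ℝ) ≤ (n : ℝ) := by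
      have : (univ.filter fun i => ¬ (0:ℝ) ≤ u i).card ≤ n := by omega
      exact_mod_cast this
    have hs : ∑ i ∈ univ.filter (fun i => ¬ (0:ℝ) ≤ u i), (((n:ℝ) - 1) * (δ * u i))
        = ((n:ℝ) - 1) * (δ * ∑ j ∈ univ.filter (fun i => ¬ (0:ℝ) ≤ u i), u j) := by
      rw [← Finset.mul_sum, ← Finset.mul_sum]
    have hsum : ∑ _i ∈ univ.filter (fun i => ¬ (0:ℝ) ≤ u i),
        (-(B + ∑ j ∈ univ.filter (fun i => (0:ℝ) ≤ u i), u j))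
        ≤ ∑ i ∈ univ.filter (fun i => ¬ (0:ℝ) ≤ u i), (((n:ℝ) - 1) * (δ * u i)) :=
      Finset.sum_le_sum fun i hi => hrow_neg i ((mem_filter.mp hi).2)
    rw [hs, Finset.sum_const, nsmul_eq_mul] at hsum
    -- hsum : q * (-(B + T⁺)) ≤ (n-1) * (δ * Sm)
    have hBTp : 0 ≤ B + ∑ j ∈ univ.filter (fun i => (0:ℝ) ≤ u i), u j := by linarith
    have h3 : ((n:ℝ) - 1) * (δ * (-(∑ j ∈ univ.filter (fun i => ¬ (0:ℝ) ≤ u i), u j)))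
        ≤ (n:ℝ) * (B + ∑ j ∈ univ.filter (fun i => (0:ℝ) ≤ u i), u j) := by
      have h5 := mul_le_mul_of_nonneg_right hq_le hBTp
      linarith [hsum, h5]
    -- multiply by δ and use δT⁺ ≤ 2B
    have m1 := mul_le_mul_of_nonneg_left h3 hδ.le
    have m2 := mul_le_mul_of_nonneg_left hTpB (by positivity : (0:ℝ) ≤ (n:ℝ))
    have m4 : 0 ≤ (n:ℝ) * ((1 - δ) * B) :=
      mul_nonneg (by positivity) (mul_nonneg (by linarith) hB0)
    have m5 : 0 ≤ ((n:ℝ) - 2) * B := mul_nonneg (by linarith) hB0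
    by_contra hcon
    rw [not_le] at hcon
    have hx := mul_lt_mul_of_pos_left hcon (by linarith : (0:ℝ) < (n:ℝ) - 1)
    linarith [m1, m2, m4, m5, hx]
  -- final bound
  intro i
  have hgoal : |u i| * (δ ^ 3 * (n:ℝ)) ≤ 14 * B := by
    rcases le_or_gt 0 (u i) with h | h
    · rw [abs_of_nonneg h]
      have s1 := mul_le_mul_of_nonneg_left (hrow_pos i h)
        (by positivity : (0:ℝ) ≤ 2 * δ ^ 2)
      have s2 : 2 * δ ^ 2 * (B - ∑ j ∈ univ.filter (fun i => ¬ (0:ℝ) ≤ u i), u j)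
          ≤ 14 * B := by
        have m3 : 0 ≤ (1 - δ ^ 2) * B :=
          mul_nonneg (by nlinarith [hδ.le, hδ1] : (0:ℝ) ≤ 1 - δ ^ 2) hB0
        linarith [hTmB, hB0, m3]
      have s3 : (n:ℝ) * (δ ^ 3 * u i) ≤ 2 * (((n:ℝ) - 1) * (δ ^ 3 * u i)) := by
        have h6 : 0 ≤ ((n:ℝ) - 2) * (δ ^ 3 * u i) :=
          mul_nonneg (by linarith) (mul_nonneg (by positivity) h)
        linarith [h6]
      linarith [s1, s2, s3]
    · rw [abs_of_neg h]
      have hneg := hrow_neg i (not_le.mpr h)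
      have s1 := mul_le_mul_of_nonneg_left hneg
        (by positivity : (0:ℝ) ≤ 2 * δ ^ 2)
      have s2 : 2 * δ ^ 2 * (B + ∑ j ∈ univ.filter (fun i => (0:ℝ) ≤ u i), u j)
          ≤ 14 * B := by
        have m1 := mul_le_mul_of_nonneg_left hTpB (by positivity : (0:ℝ) ≤ 2 * δ)
        have m2 : 0 ≤ (1 - δ) * B := mul_nonneg (by linarith) hB0
        have m3 : 0 ≤ (1 - δ ^ 2) * B :=
          mul_nonneg (by nlinarith [hδ.le, hδ1] : (0:ℝ) ≤ 1 - δ ^ 2) hB0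
        linarith [m1, m2, m3, hB0]
      have s3 : (n:ℝ) * (δ ^ 3 * (-u i)) ≤ 2 * (((n:ℝ) - 1) * (δ ^ 3 * (-u i))) := by
        have h6 : 0 ≤ ((n:ℝ) - 2) * (δ ^ 3 * (-u i)) :=
          mul_nonneg (by linarith) (mul_nonneg (by positivity) (by linarith))
        linarith [h6]
      linarith [s1, s2, s3]
  have hpos : (0:ℝ) < δ ^ 3 * (n:ℝ) := by positivity
  rw [show (14:ℝ) / δ ^ 3 / (n:ℝ) * B = 14 * B / (δ ^ 3 * (n:ℝ)) by ring,
    le_div_iff₀ hpos]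
  exact hgoal

/-- Core combinatorial lemma. -/
private lemma key_lemma {n : ℕ} (hn : 4 ≤ n) (δ : ℝ) (hδ : 0 < δ) (hδ1 : δ ≤ 1)
    (t : Fin n → Fin n → ℝ) (ht : ∀ i j : Fin n, i ≠ j → δ ≤ t i j ∧ t i j ≤ 1)
    (u E : Fin n → ℝ)
    (hE : ∀ i, E i = ∑ j ∈ univ.erase i, (t i j * u i + t j i * u j))
    (B : ℝ) (hB : ∀ i, |E i| ≤ B) :
    ∀ i, |u i| ≤ 14 / δ ^ 3 / (n : ℝ) * B := by
  classical
  rcases le_or_gt ((univ.filter fun i => ¬ (0:ℝ) ≤ u i).card)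
    ((univ.filter fun i => (0:ℝ) ≤ u i).card) with hc | hc
  · exact key_aux hn δ hδ hδ1 t ht u E hE B hB hc
  · -- apply to -u
    have h := key_aux hn δ hδ hδ1 t ht (fun i => -u i) (fun i => -E i)
      (fun i => by
        show -E i = ∑ j ∈ univ.erase i, (t i j * (-u i) + t j i * (-u j))
        rw [hE i, ← Finset.sum_neg_distrib]
        exact Finset.sum_congr rfl fun j _ => by ring)
      B (fun i => by show |(-E i)| ≤ B; rw [abs_neg]; exact hB i)
      (by
        show (univ.filter fun i => ¬ (0:ℝ) ≤ -u i).card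
            ≤ (univ.filter fun i => (0:ℝ) ≤ -u i).card
        have h1 : (univ.filter fun i => ¬ (0:ℝ) ≤ -u i).card
            ≤ (univ.filter fun i => (0:ℝ) ≤ u i).card := by
          apply Finset.card_le_card
          intro a ha
          simp only [mem_filter, mem_univ, true_and, not_le, neg_lt, neg_zero] at ha ⊢
          linarith
        have h2 : (univ.filter fun i => ¬ (0:ℝ) ≤ u i).card
            ≤ (univ.filter fun i => (0:ℝ) ≤ -u i).card := by
          apply Finset.card_le_card
          intro a ha
          simp only [mem_filter, mem_univ, true_and, not_le] at ha ⊢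
          linarith
        omega)
    intro i
    have := h i
    rwa [abs_neg] at this

/-- core of Lemma A.5: deterministic sup-norm error bound for any
root of the degree moment equations, with constants depending only on `c₁, c₂`. -/
theorem sup_norm_error_bound_degree_moment_root
    (c₁ c₂ : ℝ) (hc₁ : c₁ ∈ Set.Ioc (0 : ℝ) (1 / 2)) (hc₂ : c₂ ∈ Set.Ioc (0 : ℝ) (1 / 2)) :
    ∃ C : ℝ, 0 < C ∧ ∃ n₀ : ℕ, 2 ≤ n₀ ∧
      ∀ n K : ℕ, n₀ ≤ n → 1 ≤ K →
        ∀ F f : ℝ → ℝ, (∀ t : ℝ, HasDerivAt F (f t) t) →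
          ∀ (β : Fin K → ℝ) (x : Fin n → Fin n → Fin K → ℝ) (d : Fin n → ℝ)
            (D : Set (Fin n → ℝ)), D.Nonempty → Convex ℝ D →
            (∀ α ∈ D, ∀ i j : Fin n, i ≠ j →
              F (α i + ∑ k, x i j k * β k) ∈ Set.Icc c₁ (1 - c₁)) →
            (∀ α ∈ D, ∀ i j : Fin n, i ≠ j →
              f (α i + ∑ k, x i j k * β k) ∈ Set.Icc c₂ (1 - c₂)) →
            ∀ α₀ αhat : Fin n → ℝ, α₀ ∈ D → αhat ∈ D →
              (∀ i : Fin n,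
                ∑ j ∈ univ.erase i,
                  F (αhat i + ∑ k, x i j k * β k) * F (αhat j + ∑ k, x j i k * β k)
                    = d i) →
              ∀ i : Fin n,
                |αhat i - α₀ i| ≤ (C / (n : ℝ)) *
                  ⨆ i' : Fin n,
                    |d i' - ∑ j ∈ univ.erase i',
                      F (α₀ i' + ∑ k, x i' j k * β k) * F (α₀ j + ∑ k, x j i' k * β k)| := by
  obtain ⟨hc₁0, hc₁2⟩ := hc₁
  obtain ⟨hc₂0, hc₂2⟩ := hc₂
  refine ⟨14 / (c₁ * c₂) ^ 3, by positivity, 4, by norm_num, ?_⟩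
  intro n K hn hK F f hF β x d D hDne hDconv hFb hfb α₀ αhat hα₀ hαhat hroot
  -- mean value theorem for each pair
  have hmvt : ∀ i j : Fin n, ∃ φ : ℝ, i ≠ j →
      (c₂ ≤ φ ∧ φ ≤ 1 - c₂ ∧
        F (αhat i + ∑ k, x i j k * β k) - F (α₀ i + ∑ k, x i j k * β k)
          = φ * (αhat i - α₀ i)) := by
    intro i j
    obtain ⟨θ, hθ0, hθ1, hθeq⟩ := mvt_param F f hF
      (α₀ i + ∑ k, x i j k * β k) (αhat i + ∑ k, x i j k * β k)
    refine ⟨f ((α₀ i + ∑ k, x i j k * β k)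
      + θ * ((αhat i + ∑ k, x i j k * β k) - (α₀ i + ∑ k, x i j k * β k))), ?_⟩
    intro hij
    have hmem : (fun k => α₀ k + θ * (αhat k - α₀ k)) ∈ D := by
      have h := hDconv hα₀ hαhat (by linarith : (0:ℝ) ≤ 1 - θ) hθ0 (by ring)
      convert h using 1
      funext k
      simp only [Pi.add_apply, Pi.smul_apply, smul_eq_mul]
      ring
    have harg : (α₀ i + ∑ k, x i j k * β k)
        + θ * ((αhat i + ∑ k, x i j k * β k) - (α₀ i + ∑ k, x i j k * β k))
        = (fun k => α₀ k + θ * (αhat k - α₀ k)) i + ∑ k, x i j k * β k := by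
      simp only []
      ring
    have hb := hfb _ hmem i j hij
    have this1 : (αhat i + ∑ k, x i j k * β k) - (α₀ i + ∑ k, x i j k * β k)
        = αhat i - α₀ i := by ring
    rw [harg]
    rw [harg, this1] at hθeq
    exact ⟨hb.1, hb.2, hθeq⟩
  choose φ hφ using hmvt
  -- the coefficient matrix
  set t : Fin n → Fin n → ℝ := fun i j =>
    (F (αhat j + ∑ k, x j i k * β k) + F (α₀ j + ∑ k, x j i k * β k)) / 2 * φ i j with htdef
  have ht : ∀ i j : Fin n, i ≠ j → c₁ * c₂ ≤ t i j ∧ t i j ≤ 1 := by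
    intro i j hij
    obtain ⟨hφ1, hφ2, _⟩ := hφ i j hij
    have hji : j ≠ i := Ne.symm hij
    have h1 := hFb αhat hαhat j i hji
    have h2 := hFb α₀ hα₀ j i hji
    obtain ⟨h1a, h1b⟩ := h1
    obtain ⟨h2a, h2b⟩ := h2
    constructor
    · have hG : c₁ ≤ (F (αhat j + ∑ k, x j i k * β k)
          + F (α₀ j + ∑ k, x j i k * β k)) / 2 := by linarith
      calc c₁ * c₂ ≤ ((F (αhat j + ∑ k, x j i k * β k)
            + F (α₀ j + ∑ k, x j i k * β k)) / 2) * φ i j :=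
          mul_le_mul hG hφ1 hc₂0.le (by linarith)
        _ = t i j := rfl
    · have hG : (F (αhat j + ∑ k, x j i k * β k)
          + F (α₀ j + ∑ k, x j i k * β k)) / 2 ≤ 1 - c₁ := by linarith
      have hGpos : 0 ≤ (F (αhat j + ∑ k, x j i k * β k)
          + F (α₀ j + ∑ k, x j i k * β k)) / 2 := by linarith
      calc t i j = ((F (αhat j + ∑ k, x j i k * β k)
            + F (α₀ j + ∑ k, x j i k * β k)) / 2) * φ i j := rfl
        _ ≤ (1 - c₁) * (1 - c₂) :=
          mul_le_mul hG hφ2 (by linarith) (by linarith)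
        _ ≤ 1 := by nlinarith
  -- the error terms
  have hE : ∀ i : Fin n,
      d i - ∑ j ∈ univ.erase i,
        F (α₀ i + ∑ k, x i j k * β k) * F (α₀ j + ∑ k, x j i k * β k)
      = ∑ j ∈ univ.erase i,
        (t i j * (αhat i - α₀ i) + t j i * (αhat j - α₀ j)) := by
    intro i
    rw [← hroot i, ← Finset.sum_sub_distrib]
    refine Finset.sum_congr rfl fun j hj => ?_
    have hji : j ≠ i := (mem_erase.mp hj).1
    have hij : i ≠ j := Ne.symm hji
    obtain ⟨_, _, he1⟩ := hφ i j hij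
    obtain ⟨_, _, he2⟩ := hφ j i hji
    simp only [htdef]
    linear_combination
      ((F (αhat j + ∑ k, x j i k * β k) + F (α₀ j + ∑ k, x j i k * β k)) / 2) * he1
      + ((F (αhat i + ∑ k, x i j k * β k) + F (α₀ i + ∑ k, x i j k * β k)) / 2) * he2
  -- bounded errors
  have hBdd : BddAbove (Set.range fun i' : Fin n =>
      |d i' - ∑ j ∈ univ.erase i',
        F (α₀ i' + ∑ k, x i' j k * β k) * F (α₀ j + ∑ k, x j i' k * β k)|) :=
    (Set.finite_range _).bddAbove
  have hB : ∀ i : Fin n,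
      |d i - ∑ j ∈ univ.erase i,
        F (α₀ i + ∑ k, x i j k * β k) * F (α₀ j + ∑ k, x j i k * β k)|
      ≤ ⨆ i' : Fin n, |d i' - ∑ j ∈ univ.erase i',
        F (α₀ i' + ∑ k, x i' j k * β k) * F (α₀ j + ∑ k, x j i' k * β k)| :=
    fun i => le_ciSup hBdd i
  have hδ : (0:ℝ) < c₁ * c₂ := mul_pos hc₁0 hc₂0
  have hδ1 : c₁ * c₂ ≤ 1 := by nlinarith
  intro i
  have := key_lemma hn (c₁ * c₂) hδ hδ1 t ht
    (fun i => αhat i - α₀ i)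
    (fun i => d i - ∑ j ∈ univ.erase i,
      F (α₀ i + ∑ k, x i j k * β k) * F (α₀ j + ∑ k, x j i k * β k))
    hE _ hB i
  calc |αhat i - α₀ i| ≤ 14 / (c₁ * c₂) ^ 3 / (n:ℝ) *
      (⨆ i' : Fin n, |d i' - ∑ j ∈ univ.erase i',
        F (α₀ i' + ∑ k, x i' j k * β k) * F (α₀ j + ∑ k, x j i' k * β k)|) := this
    _ = (14 / (c₁ * c₂) ^ 3 / (n:ℝ)) *
      (⨆ i' : Fin n, |d i' - ∑ j ∈ univ.erase i',
        F (α₀ i' + ∑ k, x i' j k * β k) * F (α₀ j + ∑ k, x j i' k * β k)|) := rfl
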